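/- If a graph G is connected and the number of vertices in a longest path of G equals the number of vertices in a longest cycle of G, then G is Hamiltonian. -/

import Mathlib

/-- If a graph `G` on at least 3 vertices is connected and the number of vertices in a longest
path of `G` equals the number of vertices in a longest cycle of `G`, then `G` is Hamiltonian.
A path of length `ℓ` has `ℓ + 1` vertices; a cycle of length `ℓ` has `ℓ` vertices. -/
theorem stmt_0 {V : Type*} [Fintype V] [DecidableEq V] (G : SimpleGraph V)
    (hcard : 3 ≤ Fintype.card V) (hconn : G.Connected)
    (u v : V) (p : G.Walk u v) (hp : p.IsPath)
    (hpmax : ∀ (x y : V) (q : G.Walk x y), q.IsPath → q.length ≤ p.length)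
    (w : V) (c : G.Walk w w) (hc : c.IsCycle)
    (hcmax : ∀ (x : V) (d : G.Walk x x), d.IsCycle → d.length ≤ c.length)
    (heq : p.length + 1 = c.length) :
    G.IsHamiltonian := by
  -- First show every vertex is on the cycle `c`.
  have hw : w ∈ c.support := c.start_mem_support
  have key : ∀ a : V, a ∈ c.support := by
    by_contra h
    push_neg at h
    obtain ⟨a, ha⟩ := h
    -- walk from w to a crosses the boundary of c.support
    obtain ⟨W⟩ := hconn w a
    obtain ⟨d, -, hdx, hdy⟩ :=
      W.exists_boundary_dart {x | x ∈ c.support} hw ha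
    set x := d.fst with hx
    set y := d.snd with hy
    have hadj : G.Adj x y := d.adj
    have hxS : x ∈ c.support := hdx
    have hyS : y ∉ c.support := hdy
    -- rotate cycle at x
    have hc' : (c.rotate x hxS).IsCycle := hc.rotate hxS
    have hlen : (c.rotate x hxS).length = c.length := by
      rw [← SimpleGraph.Walk.length_darts, ← SimpleGraph.Walk.length_darts]
      exact (c.rotate_darts x hxS).perm.length_eq
    have hy' : y ∉ (c.rotate x hxS).support := by
      intro hmem
      rcases List.mem_cons.mp (by
        have : (c.rotate x hxS).support = x :: (c.rotate x hxS).support.tail := by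
          rw [← SimpleGraph.Walk.support_tail_of_not_nil _ hc'.not_nil]
          exact (SimpleGraph.Walk.cons_support_tail hc'.not_nil).symm
        rwa [this] at hmem) with h1 | h2
      · exact hyS (h1 ▸ hxS)
      · have := (SimpleGraph.Walk.support_rotate c x hxS).mem_iff.mp h2
        exact hyS (List.mem_of_mem_tail this)
    -- decompose the rotated cycle as cons hxb q
    obtain ⟨b, hxb, q, hE⟩ : ∃ (b : V) (hxb : G.Adj x b) (q : G.Walk b x),
        c.rotate x hxS = SimpleGraph.Walk.cons hxb q := by
      cases hE : c.rotate x hxS with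
      | nil => rw [hE] at hc'; exact absurd SimpleGraph.Walk.nil_nil hc'.not_nil
      | cons hxb q => exact ⟨_, hxb, q, rfl⟩
    rw [hE] at hc' hy' hlen
    have hq : q.IsPath ∧ _ := (SimpleGraph.Walk.cons_isCycle_iff q hxb).mp hc'
    have hyq : y ∉ q.support := fun hm => hy' (by simp [hm])
    have hqrev : q.reverse.IsPath := hq.1.reverse
    have hyqr : y ∉ q.reverse.support := by
      rwa [SimpleGraph.Walk.support_reverse, List.mem_reverse]
    have hpath : (SimpleGraph.Walk.cons hadj.symm q.reverse).IsPath :=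
      hqrev.cons hyqr
    have hle := hpmax _ _ _ hpath
    have : q.length + 1 = c.length := by simpa using hlen
    simp only [SimpleGraph.Walk.length_cons, SimpleGraph.Walk.length_reverse] at hle
    omega
  -- Now `c` is a Hamiltonian cycle.
  intro _
  refine ⟨w, c, ?_⟩
  rw [SimpleGraph.Walk.isHamiltonianCycle_iff_isCycle_and_support_count_tail_eq_one]
  refine ⟨hc, fun a => ?_⟩
  have hnodup : c.support.tail.Nodup := hc.2
  have hmem : a ∈ c.support.tail := by
    have ha := key a
    rcases List.mem_cons.mp (by
      have : c.support = w :: c.support.tail := by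
        rw [← SimpleGraph.Walk.support_tail_of_not_nil c hc.not_nil]
        exact (SimpleGraph.Walk.cons_support_tail (p := c) hc.not_nil).symm
      rwa [this] at ha) with h1 | h2
    · subst h1
      rw [← SimpleGraph.Walk.support_tail_of_not_nil c hc.not_nil]
      exact c.tail.end_mem_support
    · exact h2
  exact List.count_eq_one_of_mem hnodup hmem
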